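/- Let A(M_θ(2,ℍ)) be the algebra generated by A_{ij} (i,j = 1,…,4) with relations A_{ij} A_{kl} = η_{ki} η_{jl} A_{kl} A_{ij}, where η = [[1,1,μ̄,μ],[1,1,μ,μ̄],[μ,μ̄,1,1],[μ̄,μ,1,1]], |μ|=1. Define det(A_θ) = Σ_{σ∈S₄} (−1)^{|σ|} ε^{σ(1)σ(2)σ(3)σ(4)} A_{1,σ(1)} A_{2,σ(2)} A_{3,σ(3)} A_{4,σ(4)}, with ε^{ijkl} = 1 except ε^{1324} = μ and cyclic permutations, ε^{1423} = μ̄ and cyclic permutations. Then for each fixed row i, det(A_θ) = Σ_l (−1)^{i+l} A_{il} Â_{il}, where Â_{il} is the algebraic complement. -/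

import Mathlib

open Complex
open scoped TensorProduct

noncomputable section

/-- The 4×4 deformation matrix of phases η = [[1,1,μ̄,μ],[1,1,μ,μ̄],[μ,μ̄,1,1],[μ̄,μ,1,1]]. -/
def eta (μ : ℂ) : Fin 4 → Fin 4 → ℂ :=
  ![![1, 1, star μ, μ], ![1, 1, μ, star μ],
    ![μ, star μ, 1, 1], ![star μ, μ, 1, 1]]

/-- The twisting tensor ε: equal to 1 except ε^{1324} = μ and its cyclic permutations,
ε^{1423} = μ̄ and its cyclic permutations (written here with 0-based indices). -/
def eps (μ : ℂ) (i j k l : Fin 4) : ℂ :=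
  if (i,j,k,l) = ((0:Fin 4),(2:Fin 4),(1:Fin 4),(3:Fin 4)) ∨ (i,j,k,l) = (2,1,3,0) ∨
     (i,j,k,l) = (1,3,0,2) ∨ (i,j,k,l) = (3,0,2,1) then μ
  else if (i,j,k,l) = ((0:Fin 4),3,1,2) ∨ (i,j,k,l) = (3,1,2,0) ∨
     (i,j,k,l) = (1,2,0,3) ∨ (i,j,k,l) = (2,0,3,1) then star μ
  else 1

/-- The quantum determinant det(A_θ) = Σ_σ (−1)^{|σ|} ε^σ A_{1σ(1)}A_{2σ(2)}A_{3σ(3)}A_{4σ(4)}. -/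
def qdet {R : Type*} [Ring R] [Algebra ℂ R] (μ : ℂ) (A : Fin 4 → Fin 4 → R) : R :=
  ∑ σ : Equiv.Perm (Fin 4),
    (((Equiv.Perm.sign σ : ℤ) : ℂ) * eps μ (σ 0) (σ 1) (σ 2) (σ 3)) •
      (A 0 (σ 0) * A 1 (σ 1) * A 2 (σ 2) * A 3 (σ 3))

/-- The algebraic complement (quantum cofactor) Â_{il}: a signed sum over the permutations σ
of {1,…,4} with σ(i) = l, of the twisted products of the entries A_{k,σ(k)}, k ≠ i, taken in
increasing order of k, with prefactor ε^{σ₁…l…σ₄} η^{σ₁ l} ⋯ η^{σ_{i−1} l}.  (The sign of the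
induced permutation of three letters is (−1)^{i+l} times the sign of σ.) -/
def cof {R : Type*} [Ring R] [Algebra ℂ R] (μ : ℂ) (A : Fin 4 → Fin 4 → R) (i l : Fin 4) : R :=
  ∑ σ : Equiv.Perm (Fin 4),
    if σ i = l then
      (((-1 : ℂ)) ^ ((i : ℕ) + (l : ℕ)) * ((Equiv.Perm.sign σ : ℤ) : ℂ) *
        eps μ (σ 0) (σ 1) (σ 2) (σ 3) *
        (((List.finRange 4).filter (fun k => decide (k < i))).map
          (fun k => eta μ (σ k) l)).prod) •
      (((List.finRange 4).map (fun k => if k = i then (1 : R) else A k (σ k))).prod)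
    else 0

set_option maxRecDepth 10000 in
lemma move {R : Type*} [Ring R] [Algebra ℂ R] (μ : ℂ) (hs : star μ * μ = 1)
  (A : Fin 4 → Fin 4 → R)
  (hA : ∀ i j k l, A i j * A k l = (_root_.eta μ k i * _root_.eta μ j l) • (A k l * A i j))
  (σ : Equiv.Perm (Fin 4)) (i : Fin 4) :
  A 0 (σ 0) * A 1 (σ 1) * A 2 (σ 2) * A 3 (σ 3) =
  ((((List.finRange 4).filter (fun k => decide (k < i))).map (fun k => _root_.eta μ (σ k) (σ i))).prod) •
  (A i (σ i) * (((List.finRange 4).map (fun k => if k = i then (1:R) else A k (σ k))).prod)) := by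
  have hμμ : μ * star μ = 1 := by rw [mul_comm]; exact hs
  fin_cases i
  · simp (config := { decide := true }) [List.finRange, mul_assoc, show (Fin.succ 2 : Fin 4) = 3 from rfl]
  · simp (config := { decide := true }) [List.finRange, mul_assoc, show (Fin.succ 2 : Fin 4) = 3 from rfl]
    rw [← mul_assoc, ← mul_assoc, hA 0 (σ 0) 1 (σ 1),
      show _root_.eta μ 1 0 = 1 from rfl, one_mul]
    simp [smul_mul_assoc, mul_assoc]
  · simp (config := { decide := true }) [List.finRange, mul_assoc, Fin.ext_iff, show (Fin.succ 2 : Fin 4) = 3 from rfl]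
    have h1 : A 1 (σ 1) * (A 2 (σ 2) * A 3 (σ 3)) =
        (_root_.eta μ 2 1 * _root_.eta μ (σ 1) (σ 2)) • (A 2 (σ 2) * (A 1 (σ 1) * A 3 (σ 3))) := by
      rw [← mul_assoc, hA 1 (σ 1) 2 (σ 2), smul_mul_assoc, mul_assoc]
    rw [h1]
    simp only [mul_smul_comm, smul_smul]
    rw [← mul_assoc, hA 0 (σ 0) 2 (σ 2), smul_mul_assoc, mul_assoc, smul_smul]
    congr 1
    rw [show _root_.eta μ 2 1 = star μ from rfl, show _root_.eta μ 2 0 = μ from rfl]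
    linear_combination (_root_.eta μ (σ 0) (σ 2) * _root_.eta μ (σ 1) (σ 2)) * hs
  · simp (config := { decide := true }) [List.finRange, mul_assoc, Fin.ext_iff, show (Fin.succ 2 : Fin 4) = 3 from rfl]
    have h1 := hA 2 (σ 2) 3 (σ 3)
    have h2 : A 1 (σ 1) * (A 3 (σ 3) * A 2 (σ 2)) =
        (_root_.eta μ 3 1 * _root_.eta μ (σ 1) (σ 3)) • (A 3 (σ 3) * (A 1 (σ 1) * A 2 (σ 2))) := by
      rw [← mul_assoc, hA 1 (σ 1) 3 (σ 3), smul_mul_assoc, mul_assoc]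
    have h3 : A 0 (σ 0) * (A 3 (σ 3) * (A 1 (σ 1) * A 2 (σ 2))) =
        (_root_.eta μ 3 0 * _root_.eta μ (σ 0) (σ 3)) •
          (A 3 (σ 3) * (A 0 (σ 0) * (A 1 (σ 1) * A 2 (σ 2)))) := by
      rw [← mul_assoc, hA 0 (σ 0) 3 (σ 3), smul_mul_assoc, mul_assoc]
    rw [h1]
    simp only [mul_smul_comm, smul_smul]
    rw [h2]
    simp only [mul_smul_comm, smul_smul]
    rw [h3, smul_smul]
    congr 1
    rw [show _root_.eta μ 3 2 = 1 from rfl, show _root_.eta μ 3 1 = μ from rfl,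
      show _root_.eta μ 3 0 = star μ from rfl]
    linear_combination (_root_.eta μ (σ 0) (σ 3) * _root_.eta μ (σ 1) (σ 3) *
      _root_.eta μ (σ 2) (σ 3)) * hμμ

/-- Laplace expansion of the quantum determinant by any fixed row i:
det(A_θ) = Σ_l (−1)^{i+l} A_{il} Â_{il}. -/
theorem stmt5 {R : Type*} [Ring R] [Algebra ℂ R]
    (μ : ℂ) (hμ : ‖μ‖ = 1)
    (A : Fin 4 → Fin 4 → R)
    (hA : ∀ i j k l, A i j * A k l = (eta μ k i * eta μ j l) • (A k l * A i j)) :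
    ∀ i : Fin 4,
      qdet μ A = ∑ l : Fin 4, ((-1 : ℂ) ^ ((i : ℕ) + (l : ℕ))) • (A i l * cof μ A i l) := by
  have hs : star μ * μ = 1 := by
    rw [show (star μ : ℂ) = (starRingEnd ℂ) μ from rfl, mul_comm, Complex.mul_conj]
    norm_num [← Complex.sq_norm, hμ]
  intro i
  unfold qdet cof
  simp only [Finset.mul_sum, Finset.smul_sum]
  rw [Finset.sum_comm]
  simp only [mul_ite, mul_zero, smul_ite, smul_zero, Finset.sum_ite_eq, Finset.mem_univ,
    if_true]
  refine Finset.sum_congr rfl fun σ _ => ?_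
  rw [move μ hs A hA σ i, smul_smul, mul_smul_comm, smul_smul]
  congr 1
  have hn : ((-1:ℂ)) ^ ((i:ℕ) + (σ i : ℕ)) * (-1) ^ ((i:ℕ) + (σ i : ℕ)) = 1 := by
    rw [← pow_add, ← two_mul, pow_mul]; norm_num
  rw [show ∀ x s e P : ℂ, x * (x * s * e * P) = (x * x) * (s * e * P) from fun _ _ _ _ => by
    ring, hn, one_mul]
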